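/- Along the compressive branch, the momentum m(ρ) = ρ u(ρ) satisfies, for every ρ ∈ (ρ_r, η ρ_r), the second derivative formula d²m/dρ² = c_r ρ_r² (√(η−1)/4) · η ρ ((3η − 4)ρ + η ρ_r)/(η ρ_r ρ − ρ²)^{5/2}, which is strictly positive; in particular ρ ↦ ρ u(ρ) is strictly convex on (ρ_r, η ρ_r). -/

import Mathlib

/-- Second derivative formula for the momentum `ρ ↦ ρ u(ρ)` along the compressive
branch, its strict positivity, and strict convexity of the momentum. -/
theorem stmt3 (γ ρr ur pr η cr : ℝ)
    (hγ : 1 < γ) (hρr : 0 < ρr) (hpr : 0 < pr)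
    (hη : η = (γ + 1) / (γ - 1))
    (hcr : cr = Real.sqrt (γ * pr / ρr))
    (u m : ℝ → ℝ)
    (hu : ∀ ρ, u ρ = ur + cr * Real.sqrt (2 / (γ - 1)) * (ρ - ρr)
        / Real.sqrt ((η * ρr - ρ) * ρ))
    (hm : ∀ ρ, m ρ = ρ * u ρ) :
    (∀ ρ ∈ Set.Ioo ρr (η * ρr),
        HasDerivAt (deriv m)
          (cr * ρr ^ 2 * (Real.sqrt (η - 1) / 4) * (η * ρ * ((3 * η - 4) * ρ + η * ρr))
            / (η * ρr * ρ - ρ ^ 2) ^ ((5 : ℝ) / 2)) ρ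
        ∧ 0 < cr * ρr ^ 2 * (Real.sqrt (η - 1) / 4) * (η * ρ * ((3 * η - 4) * ρ + η * ρr))
            / (η * ρr * ρ - ρ ^ 2) ^ ((5 : ℝ) / 2))
    ∧ StrictConvexOn ℝ (Set.Ioo ρr (η * ρr)) m := by
  have hγ1 : 0 < γ - 1 := by linarith
  have hη1 : 1 < η := by
    rw [hη, lt_div_iff₀ hγ1]; linarith
  have hη0 : 0 < η - 1 := by linarith
  have hcr0 : 0 < cr := by
    rw [hcr]; exact Real.sqrt_pos.2 (by positivity)
  have hs2 : Real.sqrt (2 / (γ - 1)) = Real.sqrt (η - 1) := by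
    congr 1; rw [hη]; field_simp; ring
  have hsq0 : 0 < Real.sqrt (η - 1) := Real.sqrt_pos.2 hη0
  set K := cr * Real.sqrt (η - 1) with hK
  have hgpos : ∀ x ∈ Set.Ioo ρr (η * ρr), 0 < η * ρr * x - x ^ 2 := by
    rintro x ⟨h1, h2⟩
    have hx0 : 0 < x := lt_trans hρr h1
    nlinarith
  set F : ℝ → ℝ := fun y =>
    y * ur + K * ((y ^ 2 - ρr * y) * (η * ρr * y - y ^ 2) ^ (-(1:ℝ)/2)) with hF
  have hmF : ∀ x ∈ Set.Ioo ρr (η * ρr), m x = F x := by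
    rintro x hx
    obtain ⟨h1, h2⟩ := hx
    have hx0 : 0 < x := lt_trans hρr h1
    have hg : 0 < η * ρr * x - x ^ 2 := hgpos x ⟨h1, h2⟩
    have he : (η * ρr - x) * x = η * ρr * x - x ^ 2 := by ring
    have hinv : (η * ρr * x - x ^ 2) ^ (-(1:ℝ)/2)
        = (Real.sqrt (η * ρr * x - x ^ 2))⁻¹ := by
      rw [Real.sqrt_eq_rpow, ← Real.rpow_neg hg.le]
      norm_num
    have hsne : Real.sqrt (η * ρr * x - x ^ 2) ≠ 0 :=
      ne_of_gt (Real.sqrt_pos.2 hg)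
    rw [hm, hu, hs2, hF]
    simp only [he, hinv]
    field_simp
    ring
  set D : ℝ → ℝ := fun y => ur + K *
      ((2*y - ρr) * (η*ρr*y - y^2) ^ (-(1:ℝ)/2)
        + (y^2 - ρr*y) * ((η*ρr - 2*y) * (-(1:ℝ)/2) * (η*ρr*y - y^2) ^ (-(3:ℝ)/2))) with hD
  -- derivatives of the building blocks
  have hgx : ∀ x : ℝ, HasDerivAt (fun y => η*ρr*y - y^2) (η*ρr - 2*x) x := by
    intro x
    exact (((hasDerivAt_id x).const_mul (η*ρr)).sub (hasDerivAt_pow 2 x)).congr_deriv (by simp)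
  have hNx : ∀ x : ℝ, HasDerivAt (fun y => y^2 - ρr*y) (2*x - ρr) x := by
    intro x
    exact ((hasDerivAt_pow 2 x).sub ((hasDerivAt_id x).const_mul ρr)).congr_deriv (by simp)
  have hFD : ∀ x ∈ Set.Ioo ρr (η * ρr), HasDerivAt F (D x) x := by
    intro x hx
    have hg : 0 < η * ρr * x - x ^ 2 := hgpos x hx
    have hr1 : HasDerivAt (fun y => (η*ρr*y - y^2) ^ (-(1:ℝ)/2))
        ((η*ρr - 2*x) * (-(1:ℝ)/2) * (η*ρr*x - x^2) ^ (-(1:ℝ)/2 - 1)) x :=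
      (hgx x).rpow_const (Or.inl hg.ne')
    have hprod := (hNx x).mul hr1
    have hfull := ((hasDerivAt_id x).mul_const ur).add (hprod.const_mul K)
    have : HasDerivAt F
        (1 * ur + K * ((2*x - ρr) * (η*ρr*x - x^2) ^ (-(1:ℝ)/2)
          + (x^2 - ρr*x) * ((η*ρr - 2*x) * (-(1:ℝ)/2) * (η*ρr*x - x^2) ^ (-(1:ℝ)/2 - 1)))) x :=
      hfull
    rw [hD]
    convert this using 1
    rw [show (-(1:ℝ)/2 - 1 : ℝ) = -(3:ℝ)/2 by norm_num]
    ring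
  have hmD : ∀ x ∈ Set.Ioo ρr (η * ρr), HasDerivAt m (D x) x := by
    intro x hx
    exact (hFD x hx).congr_of_eventuallyEq
      (Filter.eventuallyEq_of_mem (isOpen_Ioo.mem_nhds hx) hmF)
  have hderiv_eq : ∀ x ∈ Set.Ioo ρr (η * ρr), deriv m x = D x :=
    fun x hx => (hmD x hx).deriv
  -- second derivative
  have key : ∀ x ∈ Set.Ioo ρr (η * ρr),
      HasDerivAt (deriv m)
        (cr * ρr ^ 2 * (Real.sqrt (η - 1) / 4) * (η * x * ((3 * η - 4) * x + η * ρr))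
          / (η * ρr * x - x ^ 2) ^ ((5 : ℝ) / 2)) x := by
    intro x hx
    have hg : 0 < η * ρr * x - x ^ 2 := hgpos x hx
    have hr1 : HasDerivAt (fun y => (η*ρr*y - y^2) ^ (-(1:ℝ)/2))
        ((η*ρr - 2*x) * (-(1:ℝ)/2) * (η*ρr*x - x^2) ^ (-(1:ℝ)/2 - 1)) x :=
      (hgx x).rpow_const (Or.inl hg.ne')
    have hr3 : HasDerivAt (fun y => (η*ρr*y - y^2) ^ (-(3:ℝ)/2))
        ((η*ρr - 2*x) * (-(3:ℝ)/2) * (η*ρr*x - x^2) ^ (-(3:ℝ)/2 - 1)) x :=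
      (hgx x).rpow_const (Or.inl hg.ne')
    have h2y : HasDerivAt (fun y => 2*y - ρr) 2 x := by
      simpa using (((hasDerivAt_id x).const_mul 2).sub_const ρr)
    have hlin : HasDerivAt (fun y => (η*ρr - 2*y) * (-(1:ℝ)/2)) ((-2) * (-(1:ℝ)/2)) x := by
      have h0 : HasDerivAt (fun y => η*ρr - 2*y) (-2 : ℝ) x := by
        simpa using ((hasDerivAt_id x).const_mul 2).const_sub (η*ρr)
      exact h0.mul_const (-(1:ℝ)/2)
    have hA := h2y.mul hr1
    have hInner := hlin.mul hr3
    have hB := (hNx x).mul hInner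
    have hfull := ((hA.add hB).const_mul K).const_add ur
    have hDD : HasDerivAt D (K *
        ((2 * (η*ρr*x - x^2) ^ (-(1:ℝ)/2)
            + (2*x - ρr) * ((η*ρr - 2*x) * (-(1:ℝ)/2) * (η*ρr*x - x^2) ^ (-(1:ℝ)/2 - 1)))
          + ((2*x - ρr) * ((η*ρr - 2*x) * (-(1:ℝ)/2) * (η*ρr*x - x^2) ^ (-(3:ℝ)/2))
            + (x^2 - ρr*x) * ((-2) * (-(1:ℝ)/2) * (η*ρr*x - x^2) ^ (-(3:ℝ)/2)
              + (η*ρr - 2*x) * (-(1:ℝ)/2) *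
                ((η*ρr - 2*x) * (-(3:ℝ)/2) * (η*ρr*x - x^2) ^ (-(3:ℝ)/2 - 1)))))) x := by
      rw [hD]
      exact hfull
    have heq : cr * ρr ^ 2 * (Real.sqrt (η - 1) / 4) * (η * x * ((3 * η - 4) * x + η * ρr))
          / (η * ρr * x - x ^ 2) ^ ((5 : ℝ) / 2)
        = K * ((2 * (η*ρr*x - x^2) ^ (-(1:ℝ)/2)
            + (2*x - ρr) * ((η*ρr - 2*x) * (-(1:ℝ)/2) * (η*ρr*x - x^2) ^ (-(1:ℝ)/2 - 1)))
          + ((2*x - ρr) * ((η*ρr - 2*x) * (-(1:ℝ)/2) * (η*ρr*x - x^2) ^ (-(3:ℝ)/2))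
            + (x^2 - ρr*x) * ((-2) * (-(1:ℝ)/2) * (η*ρr*x - x^2) ^ (-(3:ℝ)/2)
              + (η*ρr - 2*x) * (-(1:ℝ)/2) *
                ((η*ρr - 2*x) * (-(3:ℝ)/2) * (η*ρr*x - x^2) ^ (-(3:ℝ)/2 - 1))))) := by
      have e15 : (-(1:ℝ)/2 - 1 : ℝ) = -(3:ℝ)/2 := by norm_num
      have e35 : (-(3:ℝ)/2 - 1 : ℝ) = -(5:ℝ)/2 := by norm_num
      rw [e15, e35]
      set t := η*ρr*x - x^2 with hT
      have ht : 0 < t := hg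
      have e5 : t ^ (-(5:ℝ)/2) = (t ^ ((5:ℝ)/2))⁻¹ := by
        rw [show (-(5:ℝ)/2) = -((5:ℝ)/2) by norm_num, Real.rpow_neg ht.le]
      have e3 : t ^ (-(3:ℝ)/2) = t * (t ^ ((5:ℝ)/2))⁻¹ := by
        rw [show (-(3:ℝ)/2) = 1 + -(5:ℝ)/2 by norm_num, Real.rpow_add ht,
          Real.rpow_one, e5]
      have e1 : t ^ (-(1:ℝ)/2) = t * (t * (t ^ ((5:ℝ)/2))⁻¹) := by
        rw [show (-(1:ℝ)/2) = 1 + -(3:ℝ)/2 by norm_num, Real.rpow_add ht,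
          Real.rpow_one, e3]
      rw [e1, e3, e5, div_eq_mul_inv, hK]
      rw [hT]
      ring
    rw [heq]
    exact hDD.congr_of_eventuallyEq
      (Filter.eventuallyEq_of_mem (isOpen_Ioo.mem_nhds hx) hderiv_eq)
  have hpos : ∀ x ∈ Set.Ioo ρr (η * ρr),
      0 < cr * ρr ^ 2 * (Real.sqrt (η - 1) / 4) * (η * x * ((3 * η - 4) * x + η * ρr))
          / (η * ρr * x - x ^ 2) ^ ((5 : ℝ) / 2) := by
    intro x hx
    have hg : 0 < η * ρr * x - x ^ 2 := hgpos x hx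
    have hx0 : 0 < x := lt_trans hρr hx.1
    have hnum2 : 0 < (3 * η - 4) * x + η * ρr := by
      nlinarith [mul_pos (sub_pos.2 hη1) hx0, hx.2]
    have hnum : 0 < η * x * ((3 * η - 4) * x + η * ρr) :=
      mul_pos (mul_pos (by linarith) hx0) hnum2
    exact div_pos (by positivity) (Real.rpow_pos_of_pos hg _)
  refine ⟨fun x hx => ⟨key x hx, hpos x hx⟩, ?_⟩
  apply strictConvexOn_of_deriv2_pos (convex_Ioo _ _)
  · exact fun x hx => (hmD x hx).continuousAt.continuousWithinAt
  · intro x hx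
    rw [interior_Ioo] at hx
    have h2 : deriv^[2] m x = deriv (deriv m) x := by
      simp [Function.iterate_succ, Function.iterate_one]
    rw [h2, (key x hx).deriv]
    exact hpos x hx
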